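/- Let u and v be CNPs of dimension n such that v has no null positions (v_i > 0 for all i). If a sequence of events E transforms u into v, then any amp-first reordering E' of E (i.e., a permutation of the events of E in which all amplifications precede all deletions) also transforms u into v. -/

import Mathlib

open scoped ENat

/-- A copy-number profile of dimension `n`: positions are `Fin n` (position `i+1` in 1-based terms),
values are non-negative integers. -/
abbrev CNP (n : ℕ) := Fin n → ℕ

/-- An event `(s, t, δ)`: affects 1-based positions in `[s, t]`, changing copy numbers by `δ`. -/
abbrev Event := ℕ × ℕ × ℤ

/-- A valid event has `1 ≤ s ≤ t ≤ n` and `δ ≠ 0`. -/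
def ValidEvent (n : ℕ) (e : Event) : Prop :=
  1 ≤ e.1 ∧ e.1 ≤ e.2.1 ∧ e.2.1 ≤ n ∧ e.2.2 ≠ 0

/-- Applying event `e = (s,t,δ)` to `u` : each 1-based position `i ∈ [s,t]` with `u_i > 0`
becomes `max(u_i + δ, 0)`; other positions are unchanged. -/
def applyEvent {n : ℕ} (u : CNP n) (e : Event) : CNP n :=
  fun i => if e.1 ≤ (i : ℕ) + 1 ∧ (i : ℕ) + 1 ≤ e.2.1 ∧ 0 < u i
    then ((u i : ℤ) + e.2.2).toNat else u i

/-- Applying a sequence of events in order. -/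
def applySeq {n : ℕ} (u : CNP n) (E : List Event) : CNP n :=
  E.foldl applyEvent u

/-- Cost of applying event `e` on `u` w.r.t. cost function `f`:
the maximum of `f (u_i) δ` over affected positions `i ∈ [s,t]`. -/
noncomputable def eventCost {n : ℕ} (f : ℕ → ℤ → ℕ∞) (u : CNP n) (e : Event) : ℕ∞ :=
  (Finset.univ.filter (fun i : Fin n => e.1 ≤ (i : ℕ) + 1 ∧ (i : ℕ) + 1 ≤ e.2.1)).sup
    (fun i => f (u i) e.2.2)

/-- Total cost of applying a sequence of events, costs evaluated on successive profiles. -/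
noncomputable def seqCost {n : ℕ} (f : ℕ → ℤ → ℕ∞) : CNP n → List Event → ℕ∞
  | _, [] => 0
  | u, e :: E => eventCost f u e + seqCost f (applyEvent u e) E

/-- `dist_f(u,v)`: minimum total cost of a sequence of valid events transforming `u` into `v`
(`⊤` if no such sequence exists). -/
noncomputable def distf {n : ℕ} (f : ℕ → ℤ → ℕ∞) (u v : CNP n) : ℕ∞ :=
  sInf { c | ∃ E : List Event, (∀ e ∈ E, ValidEvent n e) ∧ applySeq u E = v ∧ seqCost f u E = c }

/-- A unit-cost function takes only values `1` and `∞`. -/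
def UnitCost (f : ℕ → ℤ → ℕ∞) : Prop := ∀ c δ, f c δ = 1 ∨ f c δ = ⊤

/-- The most permissive cost function: every event costs `1`. -/
def anyCost : ℕ → ℤ → ℕ∞ := fun _ _ => 1

/-- `dist_any(u,v)`: minimum number of events transforming `u` into `v`. -/
noncomputable def distAny {n : ℕ} (u v : CNP n) : ℕ∞ := distf anyCost u v

/-- The difference vector `w = u - v` in 1-based indexing, extended by `w_0 = w_{n+1} = 0`. -/
def diffExt {n : ℕ} (u v : CNP n) (i : ℕ) : ℤ :=
  if h : 1 ≤ i ∧ i ≤ n then (u ⟨i - 1, by omega⟩ : ℤ) - (v ⟨i - 1, by omega⟩ : ℤ) else 0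

/-- `[a,b] ⊆ [0, n+1]` is a flat interval of `w` if `w` is constant on it. -/
def IsFlat (n : ℕ) (w : ℕ → ℤ) (a b : ℕ) : Prop :=
  a ≤ b ∧ b ≤ n + 1 ∧ ∀ i j, a ≤ i → i ≤ b → a ≤ j → j ≤ b → w i = w j

/-- A maximal flat interval: flat, and not properly contained in a flat interval. -/
def IsMaxFlat (n : ℕ) (w : ℕ → ℤ) (a b : ℕ) : Prop :=
  IsFlat n w a b ∧ ∀ a' b', a' ≤ a → b ≤ b' → IsFlat n w a' b' → a' = a ∧ b' = b

/-- `|F_w|`: the number of maximal flat intervals of `w` over `[0, n+1]`. -/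
noncomputable def numFlat (n : ℕ) (w : ℕ → ℤ) : ℕ :=
  Nat.card {p : ℕ × ℕ // IsMaxFlat n w p.1 p.2}


/-- One-dimensional step function. -/
def step1 (x : ℕ) (δ : ℤ) : ℕ := if 0 < x then ((x : ℤ) + δ).toNat else x

lemma foldl_step1_zero (L : List ℤ) : L.foldl step1 0 = 0 := by
  induction L with
  | nil => rfl
  | cons δ L ih => simpa [step1] using ih

lemma pos_of_foldl_step1_pos {L : List ℤ} {x : ℕ} (h : 0 < L.foldl step1 x) : 0 < x := by
  by_contra hx
  have : x = 0 := by omega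
  rw [this, foldl_step1_zero] at h
  exact absurd h (by omega)

lemma foldl_step1_val {L : List ℤ} : ∀ {x : ℕ}, 0 < L.foldl step1 x →
    ((L.foldl step1 x : ℕ) : ℤ) = (x : ℤ) + L.sum := by
  induction L with
  | nil => intro x _; simp
  | cons δ L ih =>
    intro x h
    have hy : 0 < step1 x δ := pos_of_foldl_step1_pos (L := L) h
    have hx : 0 < x := by
      by_contra hx
      have : x = 0 := by omega
      simp [step1, this] at hy
    have hs : step1 x δ = ((x : ℤ) + δ).toNat := by simp [step1, hx]
    have hsz : (step1 x δ : ℤ) = (x : ℤ) + δ := by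
      rw [hs]; rw [Int.toNat_of_nonneg]
      rw [hs] at hy
      omega
    have := ih (x := step1 x δ) h
    rw [List.foldl_cons] at *
    rw [this, hsz, List.sum_cons]; ring

lemma sum_nonpos_of_neg {L : List ℤ} (h : ∀ δ ∈ L, δ < 0) : L.sum ≤ 0 := by
  induction L with
  | nil => simp
  | cons δ L ih =>
    have := h δ (by simp)
    have := ih (fun a ha => h a (by simp [ha]))
    simp [List.sum_cons]; omega

lemma foldl_step1_pos_amp {L : List ℤ} (h : ∀ δ ∈ L, 0 < δ) : ∀ {x : ℕ}, 0 < x →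
    0 < L.foldl step1 x := by
  induction L with
  | nil => intro x hx; simpa using hx
  | cons δ L ih =>
    intro x hx
    have hδ := h δ (by simp)
    have hy : 0 < step1 x δ := by simp [step1, hx]; omega
    exact ih (fun a ha => h a (by simp [ha])) hy

lemma foldl_step1_pos_del {L : List ℤ} (h : ∀ δ ∈ L, δ < 0) : ∀ {x : ℕ}, 0 < x →
    0 < (x : ℤ) + L.sum → 0 < L.foldl step1 x := by
  induction L with
  | nil => intro x hx _; simpa using hx
  | cons δ L ih =>
    intro x hx hsum
    have hδ := h δ (by simp)
    have hrest : L.sum ≤ 0 := sum_nonpos_of_neg (fun a ha => h a (by simp [ha]))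
    rw [List.sum_cons] at hsum
    have hy : 0 < step1 x δ := by
      simp [step1, hx]; omega
    have hyz : (step1 x δ : ℤ) = (x : ℤ) + δ := by
      simp only [step1, if_pos hx]
      rw [Int.toNat_of_nonneg]; omega
    rw [List.foldl_cons]
    exact ih (fun a ha => h a (by simp [ha])) hy (by rw [hyz]; omega)

/-- The deltas of events of `E` covering position `i`. -/
def deltasAt {n : ℕ} (i : Fin n) (E : List Event) : List ℤ :=
  (E.filter (fun e => decide (e.1 ≤ (i : ℕ) + 1 ∧ (i : ℕ) + 1 ≤ e.2.1))).map (·.2.2)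

lemma applySeq_pointwise {n : ℕ} (i : Fin n) : ∀ (E : List Event) (u : CNP n),
    applySeq u E i = (deltasAt i E).foldl step1 (u i) := by
  intro E
  induction E with
  | nil => intro u; rfl
  | cons e E ih =>
    intro u
    have : applySeq u (e :: E) = applySeq (applyEvent u e) E := rfl
    rw [this, ih]
    by_cases hc : e.1 ≤ (i : ℕ) + 1 ∧ (i : ℕ) + 1 ≤ e.2.1
    · have h1 : deltasAt i (e :: E) = e.2.2 :: deltasAt i E := by
        simp [deltasAt, List.filter_cons, hc]
        rw [if_pos (by omega), List.map_cons]
      have h2 : applyEvent u e i = step1 (u i) e.2.2 := by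
        by_cases hu : 0 < u i
        · simp [applyEvent, hc, hu, step1]
        · simp [applyEvent, hu, step1]
      rw [h1, h2, List.foldl_cons]
    · have h1 : deltasAt i (e :: E) = deltasAt i E := by
        simp [deltasAt, List.filter_cons, hc]
        rw [if_neg (by omega)]
      have h2 : applyEvent u e i = u i := by
        simp only [applyEvent]
        rw [if_neg (by tauto)]
      rw [h1, h2]

/-- if `v` has no null positions and `E` transforms `u` into `v`, then any
amp-first reordering `E'` of `E` (a permutation with all amplifications before all deletions)
also transforms `u` into `v`. -/
theorem stmt3 {n : ℕ} (u v : CNP n) (hv : ∀ i, 0 < v i)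
    (E E' A D : List Event)
    (hEvalid : ∀ e ∈ E, ValidEvent n e)
    (hE : applySeq u E = v)
    (hperm : E'.Perm E)
    (hE' : E' = A ++ D)
    (hA : ∀ e ∈ A, 0 < e.2.2) (hD : ∀ e ∈ D, e.2.2 < 0) :
    applySeq u E' = v := by
  subst hE'
  funext i
  -- 1D data
  set x := u i with hx
  set L := deltasAt i E with hL
  have hEpt : (L.foldl step1 x) = v i := by
    rw [← applySeq_pointwise, hE]
  have hvpos : 0 < L.foldl step1 x := by rw [hEpt]; exact hv i
  have hxpos : 0 < x := pos_of_foldl_step1_pos hvpos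
  have hval : ((v i : ℕ) : ℤ) = (x : ℤ) + L.sum := by
    rw [← hEpt]; exact foldl_step1_val hvpos
  -- deltas of A ++ D
  have hsplit : deltasAt i (A ++ D) = deltasAt i A ++ deltasAt i D := by
    simp [deltasAt, List.filter_append]
  have hpermL : (deltasAt i (A ++ D)).Perm L := by
    exact ((hperm.filter _).map _)
  have hsum : (deltasAt i A).sum + (deltasAt i D).sum = L.sum := by
    have := hpermL.sum_eq
    rwa [hsplit, List.sum_append] at this
  have hAd : ∀ δ ∈ deltasAt i A, 0 < δ := by
    intro δ hδ
    simp only [deltasAt, List.mem_map, List.mem_filter] at hδ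
    obtain ⟨e, ⟨he, _⟩, rfl⟩ := hδ
    exact hA e he
  have hDd : ∀ δ ∈ deltasAt i D, δ < 0 := by
    intro δ hδ
    simp only [deltasAt, List.mem_map, List.mem_filter] at hδ
    obtain ⟨e, ⟨he, _⟩, rfl⟩ := hδ
    exact hD e he
  -- apply A
  have hyA : 0 < (deltasAt i A).foldl step1 x := foldl_step1_pos_amp hAd hxpos
  have hyAval : (((deltasAt i A).foldl step1 x : ℕ) : ℤ) = (x : ℤ) + (deltasAt i A).sum :=
    foldl_step1_val hyA
  set y := (deltasAt i A).foldl step1 x with hy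
  -- apply D
  have hsumD : 0 < (y : ℤ) + (deltasAt i D).sum := by
    rw [hyAval]
    have : (0 : ℤ) < (v i : ℤ) := by exact_mod_cast hv i
    omega
  have hfin : 0 < (deltasAt i D).foldl step1 y := foldl_step1_pos_del hDd hyA hsumD
  have hfinval : (((deltasAt i D).foldl step1 y : ℕ) : ℤ) = (y : ℤ) + (deltasAt i D).sum :=
    foldl_step1_val hfin
  have : applySeq u (A ++ D) i = (deltasAt i D).foldl step1 y := by
    rw [applySeq_pointwise, hsplit, List.foldl_append]
  rw [this]
  have : (((deltasAt i D).foldl step1 y : ℕ) : ℤ) = ((v i : ℕ) : ℤ) := by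
    rw [hfinval, hyAval, hval]; omega
  exact_mod_cast this
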